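/- Let T(y) = (1 − y)/(2 − y) and S(y) = 1/(3 − y). Then S(y) = T(T(y)) for all y ∈ [0,1]; consequently, for every nonempty finite list g_1, …, g_m of functions with each g_i ∈ {T, S}, the composition g_m ∘ ⋯ ∘ g_1 maps [0,1] into [0,1] and has exactly one fixed point in [0,1], namely (3 − √5)/2, which is irrational. -/

import Mathlib

/-- The map `T(y) = (1-y)/(2-y)`. -/
noncomputable def T (y : ℝ) : ℝ := (1 - y) / (2 - y)

/-- The map `S(y) = 1/(3-y)`. -/
noncomputable def S (y : ℝ) : ℝ := 1 / (3 - y)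

noncomputable def alphaTS : ℝ := (3 - Real.sqrt 5) / 2

lemma sqrt5_lt : Real.sqrt 5 < 3 := by
  have : (5:ℝ) < 3^2 := by norm_num
  nlinarith [Real.sq_sqrt (by norm_num : (5:ℝ) ≥ 0), Real.sqrt_nonneg 5]

lemma sqrt5_gt : 2 < Real.sqrt 5 := by
  nlinarith [Real.sq_sqrt (by norm_num : (5:ℝ) ≥ 0), Real.sqrt_nonneg 5]

lemma alpha_mem : 0 ≤ alphaTS ∧ alphaTS ≤ 1 := by
  unfold alphaTS
  constructor <;> nlinarith [sqrt5_lt, sqrt5_gt]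

lemma alpha_eq : alphaTS ^ 2 - 3 * alphaTS + 1 = 0 := by
  unfold alphaTS
  have h : Real.sqrt 5 ^ 2 = 5 := Real.sq_sqrt (by norm_num)
  nlinarith [h]

lemma T_fix : T alphaTS = alphaTS := by
  have h2 : (2:ℝ) - alphaTS ≠ 0 := by
    have := alpha_mem.2; intro h; nlinarith
  unfold T
  field_simp
  nlinarith [alpha_eq]

lemma S_fix : S alphaTS = alphaTS := by
  have h3 : (3:ℝ) - alphaTS ≠ 0 := by
    have := alpha_mem.2; intro h; nlinarith
  unfold S
  field_simp
  nlinarith [alpha_eq]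

lemma T_maps {y : ℝ} (h0 : 0 ≤ y) (h1 : y ≤ 1) : 0 ≤ T y ∧ T y ≤ 1 := by
  unfold T
  have hd : (0:ℝ) < 2 - y := by linarith
  constructor
  · exact div_nonneg (by linarith) hd.le
  · rw [div_le_one hd]; linarith

lemma S_maps {y : ℝ} (h0 : 0 ≤ y) (h1 : y ≤ 1) : 0 ≤ S y ∧ S y ≤ 1 := by
  unfold S
  have hd : (0:ℝ) < 3 - y := by linarith
  constructor
  · exact div_nonneg (by norm_num) hd.le
  · rw [div_le_one hd]; linarith

lemma T_contr {y z : ℝ} (hy0 : 0 ≤ y) (hy1 : y ≤ 1) (hz0 : 0 ≤ z) (hz1 : z ≤ 1)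
    (hne : y ≠ z) : |T y - T z| < |y - z| := by
  have hdy : (0:ℝ) < 2 - y := by linarith
  have hdz : (0:ℝ) < 2 - z := by linarith
  have hsq : 0 < (y - z)^2 := by
    have h := sub_ne_zero.mpr hne
    positivity
  have hD : 1 < (2 - y) * (2 - z) := by nlinarith
  have key : T y - T z = (z - y) / ((2 - y) * (2 - z)) := by
    unfold T; field_simp; ring
  have hpos : 0 < |y - z| := abs_pos.mpr (sub_ne_zero.mpr hne)
  rw [key, abs_div, abs_of_pos (mul_pos hdy hdz), abs_sub_comm z y]
  exact div_lt_self hpos hD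

lemma S_contr {y z : ℝ} (hy0 : 0 ≤ y) (hy1 : y ≤ 1) (hz0 : 0 ≤ z) (hz1 : z ≤ 1)
    (hne : y ≠ z) : |S y - S z| < |y - z| := by
  have hdy : (0:ℝ) < 3 - y := by linarith
  have hdz : (0:ℝ) < 3 - z := by linarith
  have hD : 1 < (3 - y) * (3 - z) := by nlinarith
  have key : S y - S z = (y - z) / ((3 - y) * (3 - z)) := by
    unfold S; field_simp; ring
  have hpos : 0 < |y - z| := abs_pos.mpr (sub_ne_zero.mpr hne)
  rw [key, abs_div, abs_of_pos (mul_pos hdy hdz)]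
  exact div_lt_self hpos hD

/-- weak properties, for all lists (incl. empty) -/
lemma fold_weak (l : List (ℝ → ℝ)) (hl : ∀ g ∈ l, g = T ∨ g = S) :
    (∀ y : ℝ, 0 ≤ y → y ≤ 1 →
      0 ≤ l.foldl (fun a g => g a) y ∧ l.foldl (fun a g => g a) y ≤ 1) ∧
    l.foldl (fun a g => g a) alphaTS = alphaTS ∧
    (∀ y z : ℝ, 0 ≤ y → y ≤ 1 → 0 ≤ z → z ≤ 1 →
      |l.foldl (fun a g => g a) y - l.foldl (fun a g => g a) z| ≤ |y - z|) := by
  induction l with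
  | nil => exact ⟨fun y h0 h1 => ⟨h0, h1⟩, rfl, fun y z _ _ _ _ => le_refl _⟩
  | cons g l ih =>
    have hg := hl g List.mem_cons_self
    have hl' : ∀ g ∈ l, g = T ∨ g = S := fun g' hg' => hl g' (List.mem_cons_of_mem _ hg')
    obtain ⟨ihmap, ihfix, ihw⟩ := ih hl'
    have gmaps : ∀ y : ℝ, 0 ≤ y → y ≤ 1 → 0 ≤ g y ∧ g y ≤ 1 := by
      rcases hg with rfl | rfl
      · exact fun y h0 h1 => T_maps h0 h1
      · exact fun y h0 h1 => S_maps h0 h1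
    have gfix : g alphaTS = alphaTS := by
      rcases hg with rfl | rfl
      · exact T_fix
      · exact S_fix
    have gcontr : ∀ y z : ℝ, 0 ≤ y → y ≤ 1 → 0 ≤ z → z ≤ 1 →
        |g y - g z| ≤ |y - z| := by
      intro y z hy0 hy1 hz0 hz1
      by_cases hne : y = z
      · subst hne; simp
      · rcases hg with rfl | rfl
        · exact (T_contr hy0 hy1 hz0 hz1 hne).le
        · exact (S_contr hy0 hy1 hz0 hz1 hne).le
    refine ⟨?_, ?_, ?_⟩
    · intro y h0 h1
      simp only [List.foldl_cons]
      exact ihmap (g y) (gmaps y h0 h1).1 (gmaps y h0 h1).2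
    · simp only [List.foldl_cons, gfix, ihfix]
    · intro y z hy0 hy1 hz0 hz1
      simp only [List.foldl_cons]
      calc |l.foldl (fun a g => g a) (g y) - l.foldl (fun a g => g a) (g z)|
          ≤ |g y - g z| := ihw _ _ (gmaps y hy0 hy1).1 (gmaps y hy0 hy1).2
              (gmaps z hz0 hz1).1 (gmaps z hz0 hz1).2
        _ ≤ |y - z| := gcontr y z hy0 hy1 hz0 hz1

lemma fold_strict (l : List (ℝ → ℝ)) (hne : l ≠ []) (hl : ∀ g ∈ l, g = T ∨ g = S)
    {y z : ℝ} (hy0 : 0 ≤ y) (hy1 : y ≤ 1) (hz0 : 0 ≤ z) (hz1 : z ≤ 1) (hyz : y ≠ z) :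
    |l.foldl (fun a g => g a) y - l.foldl (fun a g => g a) z| < |y - z| := by
  obtain ⟨g, l', rfl⟩ := List.exists_cons_of_ne_nil hne
  have hg := hl g List.mem_cons_self
  have hl' : ∀ g ∈ l', g = T ∨ g = S := fun g' hg' => hl g' (List.mem_cons_of_mem _ hg')
  obtain ⟨ihmap, _, ihw⟩ := fold_weak l' hl'
  have gmaps : ∀ w : ℝ, 0 ≤ w → w ≤ 1 → 0 ≤ g w ∧ g w ≤ 1 := by
    rcases hg with rfl | rfl
    · exact fun w h0 h1 => T_maps h0 h1
    · exact fun w h0 h1 => S_maps h0 h1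
  have gstrict : |g y - g z| < |y - z| := by
    rcases hg with rfl | rfl
    · exact T_contr hy0 hy1 hz0 hz1 hyz
    · exact S_contr hy0 hy1 hz0 hz1 hyz
  simp only [List.foldl_cons]
  calc |l'.foldl (fun a g => g a) (g y) - l'.foldl (fun a g => g a) (g z)|
      ≤ |g y - g z| := ihw _ _ (gmaps y hy0 hy1).1 (gmaps y hy0 hy1).2
          (gmaps z hz0 hz1).1 (gmaps z hz0 hz1).2
    _ < |y - z| := gstrict

theorem composition_T_S_fixedPoint :
    (∀ y : ℝ, 0 ≤ y → y ≤ 1 → S y = T (T y)) ∧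
    (∀ l : List (ℝ → ℝ), l ≠ [] → (∀ g ∈ l, g = T ∨ g = S) →
      (∀ y : ℝ, 0 ≤ y → y ≤ 1 →
        0 ≤ l.foldl (fun a g => g a) y ∧ l.foldl (fun a g => g a) y ≤ 1) ∧
      (∀ y : ℝ, 0 ≤ y → y ≤ 1 →
        (l.foldl (fun a g => g a) y = y ↔ y = (3 - Real.sqrt 5) / 2))) ∧
    Irrational ((3 - Real.sqrt 5) / 2) := by
  refine ⟨?_, ?_, ?_⟩
  · intro y h0 h1
    unfold S T
    have h2 : (0:ℝ) < 2 - y := by linarith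
    have h3 : (2:ℝ) - (1 - y) / (2 - y) ≠ 0 := by
      rw [sub_ne_zero]
      intro h
      have : (2:ℝ) * (2 - y) = 1 - y := by
        field_simp at h; linarith
      linarith
    field_simp
    ring
  · intro l hne hl
    obtain ⟨hmap, hfix, hw⟩ := fold_weak l hl
    refine ⟨hmap, ?_⟩
    intro y h0 h1
    constructor
    · intro hfp
      by_contra hya
      have hya' : y ≠ alphaTS := hya
      have := fold_strict l hne hl h0 h1 alpha_mem.1 alpha_mem.2 hya'
      rw [hfp, hfix] at this
      exact lt_irrefl _ this
    · intro h
      rw [h]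
      exact hfix
  · have h5 : Irrational (Real.sqrt 5) := by
      have : Nat.Prime 5 := by norm_num
      simpa using this.irrational_sqrt
    have h1 : Irrational ((3:ℚ) - Real.sqrt 5) := h5.ratCast_sub 3
    have h2 : Irrational (((3:ℚ) - Real.sqrt 5) / (2:ℚ)) := h1.div_ratCast (by norm_num)
    simpa using h2
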